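/- Let x_0 < x_1 < ... < x_n (n ≥ 1) be a partition, let β > 0 be a real constant, let f be continuously differentiable on [x_0, x_n], and let u be twice continuously differentiable on [x_0, x_n] with β·u''(x) = −f(x), u(x_0) = 0, u(x_n) = 0. Suppose c_0, ..., c_n with c_0 = c_n = 0 satisfy the Galerkin equations β·( (c_i − c_{i−1})/(x_i − x_{i−1}) − (c_{i+1} − c_i)/(x_{i+1} − x_i) ) = ∫_{x_{i−1}}^{x_{i+1}} f·φ_i for all 1 ≤ i ≤ n−1, where φ_i is the hat function at x_i. Define, for x in [x_k, x_{k+1}], u_h^{new}(x) = c_k·(x_{k+1}−x)/(x_{k+1}−x_k) + c_{k+1}·(x−x_k)/(x_{k+1}−x_k) − (1/(2β))(x−x_k)(x−x_{k+1})·f(x). Then u_h^{new}(x_k) = u(x_k) for every node x_k, and for every k and every x in [x_k, x_{k+1}], |u(x) − u_h^{new}(x)| ≤ (h^3/(8β)) · sup_{t∈[x_0,x_n]} |f'(t)|, where h = max_k (x_{k+1} − x_k). -/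

import Mathlib

/-- The hat (piecewise linear) basis function associated with the nodes `xm < xc < xp`:
it equals `(t−xm)/(xc−xm)` on `[xm,xc]`, `(xp−t)/(xp−xc)` on `[xc,xp]`, and `0` otherwise. -/
noncomputable def hatFun (xm xc xp : ℝ) (t : ℝ) : ℝ :=
  if t ∈ Set.Icc xm xc then (t - xm) / (xc - xm)
  else if t ∈ Set.Icc xc xp then (xp - t) / (xp - xc)
  else 0

section FemAux
open Set MeasureTheory intervalIntegral
lemma interp_err (X0 XN a b : ℝ) (g g' g'' g''' : ℝ → ℝ)
    (hab : a < b) (hX0a : X0 ≤ a) (hbXN : b ≤ XN)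
    (hg : ∀ t ∈ Set.Icc X0 XN, HasDerivWithinAt g (g' t) (Set.Icc X0 XN) t)
    (hg' : ∀ t ∈ Set.Icc X0 XN, HasDerivWithinAt g' (g'' t) (Set.Icc X0 XN) t)
    (hg'' : ∀ t ∈ Set.Icc X0 XN, HasDerivWithinAt g'' (g''' t) (Set.Icc X0 XN) t)
    (M : ℝ) (hM : ∀ t ∈ Set.Icc X0 XN, |g''' t| ≤ M)
    (t : ℝ) (ht : t ∈ Set.Icc a b) :
    |g t - (g a * (b - t) / (b - a) + g b * (t - a) / (b - a)
        + 1/2 * (t - a) * (t - b) * g'' t)| ≤ (b - a)^3 / 8 * M := by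
  have hXX : X0 ≤ XN := le_trans hX0a (le_trans hab.le hbXN)
  have hsub : Set.Icc a b ⊆ Set.Icc X0 XN := Icc_subset_Icc hX0a hbXN
  have hba : (0:ℝ) < b - a := by linarith
  have hbane : b - a ≠ 0 := ne_of_gt hba
  have hM0 : 0 ≤ M := le_trans (abs_nonneg _) (hM a ⟨hX0a, le_trans hab.le hbXN⟩)
  have hRHS : 0 ≤ (b - a)^3 / 8 * M := by positivity
  -- interior differentiability
  have hint : ∀ s ∈ Ioo a b, Set.Icc X0 XN ∈ nhds s := by
    intro s hs
    exact Icc_mem_nhds (lt_of_le_of_lt hX0a hs.1) (lt_of_lt_of_le hs.2 hbXN)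
  have hgd : ∀ s ∈ Ioo a b, HasDerivAt g (g' s) s := fun s hs =>
    (hg s (hsub ⟨hs.1.le, hs.2.le⟩)).hasDerivAt (hint s hs)
  have hg'd : ∀ s ∈ Ioo a b, HasDerivAt g' (g'' s) s := fun s hs =>
    (hg' s (hsub ⟨hs.1.le, hs.2.le⟩)).hasDerivAt (hint s hs)
  have hg''d : ∀ s ∈ Ioo a b, HasDerivAt g'' (g''' s) s := fun s hs =>
    (hg'' s (hsub ⟨hs.1.le, hs.2.le⟩)).hasDerivAt (hint s hs)
  have hgc : ContinuousOn g (Set.Icc X0 XN) := fun s hs => (hg s hs).continuousWithinAt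
  have hg'c : ContinuousOn g' (Set.Icc X0 XN) := fun s hs => (hg' s hs).continuousWithinAt
  have hg''c : ContinuousOn g'' (Set.Icc X0 XN) := fun s hs => (hg'' s hs).continuousWithinAt
  rcases eq_or_lt_of_le ht.1 with hta | hta
  · rw [← hta]
    have : g a - (g a * (b - a) / (b - a) + g b * (a - a) / (b - a)
        + 1/2 * (a - a) * (a - b) * g'' a) = 0 := by field_simp; ring
    rw [this, abs_zero]; exact hRHS
  rcases eq_or_lt_of_le ht.2 with htb | htb
  · rw [htb]
    have : g b - (g a * (b - b) / (b - a) + g b * (b - a) / (b - a)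
        + 1/2 * (b - a) * (b - b) * g'' b) = 0 := by field_simp; ring
    rw [this, abs_zero]; exact hRHS
  -- now a < t < b
  set K : ℝ := (g t - (g a * (b - t) / (b - a) + g b * (t - a) / (b - a))) / ((t - a) * (t - b))
    with hK
  have htane : t - a ≠ 0 := ne_of_gt (by linarith)
  have htbne : t - b ≠ 0 := ne_of_lt (by linarith)
  set F : ℝ → ℝ := fun s => g s - (g a * (b - s) / (b - a) + g b * (s - a) / (b - a)
      + K * ((s - a) * (s - b))) with hF
  set F' : ℝ → ℝ := fun s => g' s - ((g b - g a) / (b - a) + K * ((s - b) + (s - a))) with hF'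
  have hFd : ∀ s ∈ Ioo a b, HasDerivAt F (F' s) s := by
    intro s hs
    have h1 : HasDerivAt (fun s : ℝ => g a * (b - s) / (b - a)) (g a * (0 - 1) / (b - a)) s :=
      (((hasDerivAt_const s b).sub (hasDerivAt_id s)).const_mul (g a)).div_const (b - a)
    have h2 : HasDerivAt (fun s : ℝ => g b * (s - a) / (b - a)) (g b * 1 / (b - a)) s :=
      (((hasDerivAt_id s).sub_const a).const_mul (g b)).div_const (b - a)
    have h3 : HasDerivAt (fun s : ℝ => K * ((s - a) * (s - b)))
        (K * (1 * (s - b) + (s - a) * 1)) s :=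
      (((hasDerivAt_id s).sub_const a).mul ((hasDerivAt_id s).sub_const b)).const_mul K
    have := (hgd s hs).sub ((h1.add h2).add h3)
    refine this.congr_deriv ?_
    simp only [F']
    ring
  have hFc : ContinuousOn F (Set.Icc a b) := by
    apply ContinuousOn.sub (hgc.mono hsub)
    fun_prop
  have hFa : F a = 0 := by simp only [F]; field_simp; ring
  have hFb : F b = 0 := by simp only [F]; field_simp; ring
  have hFt : F t = 0 := by
    simp only [F, hK]
    rw [div_mul_cancel₀ _ (mul_ne_zero htane htbne)]
    ring
  obtain ⟨ξ₁, hξ₁, hFξ₁⟩ := exists_hasDerivAt_eq_zero hta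
    (hFc.mono (Icc_subset_Icc le_rfl ht.2)) (hFa.trans hFt.symm)
    (fun s hs => hFd s ⟨hs.1, lt_trans hs.2 htb⟩)
  obtain ⟨ξ₂, hξ₂, hFξ₂⟩ := exists_hasDerivAt_eq_zero htb
    (hFc.mono (Icc_subset_Icc ht.1 le_rfl)) (hFt.trans hFb.symm)
    (fun s hs => hFd s ⟨lt_trans hta hs.1, hs.2⟩)
  have hξ₁ab : ξ₁ ∈ Ioo a b := ⟨hξ₁.1, lt_trans hξ₁.2 htb⟩
  have hξ₂ab : ξ₂ ∈ Ioo a b := ⟨lt_trans hta hξ₂.1, hξ₂.2⟩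
  have hξ₁₂ : ξ₁ < ξ₂ := lt_trans hξ₁.2 hξ₂.1
  have hF'd : ∀ s ∈ Ioo ξ₁ ξ₂, HasDerivAt F' (g'' s - K * 2) s := by
    intro s hs
    have hsab : s ∈ Ioo a b := ⟨lt_trans hξ₁ab.1 hs.1, lt_trans hs.2 hξ₂ab.2⟩
    have h3 : HasDerivAt (fun s : ℝ => (g b - g a) / (b - a) + K * ((s - b) + (s - a)))
        (0 + K * (1 + 1)) s :=
      (hasDerivAt_const s _).add
        ((((hasDerivAt_id s).sub_const b).add ((hasDerivAt_id s).sub_const a)).const_mul K)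
    have := (hg'd s hsab).sub h3
    refine this.congr_deriv ?_
    ring
  have hF'c : ContinuousOn F' (Set.Icc ξ₁ ξ₂) := by
    apply ContinuousOn.sub
    · exact hg'c.mono (fun s hs => hsub ⟨hξ₁ab.1.le.trans hs.1, hs.2.trans hξ₂ab.2.le⟩)
    · fun_prop
  obtain ⟨ξ, hξ, hξK⟩ := exists_hasDerivAt_eq_zero hξ₁₂ hF'c (hFξ₁.trans hFξ₂.symm) hF'd
  have hξab : ξ ∈ Ioo a b := ⟨lt_trans hξ₁ab.1 hξ.1, lt_trans hξ.2 hξ₂ab.2⟩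
  have hKval : K = g'' ξ / 2 := by
    have : g'' ξ - K * 2 = 0 := hξK
    linarith
  -- |g'' ξ - g'' t| ≤ M * (b - a)
  have hdiff : |g'' ξ - g'' t| ≤ M * (b - a) := by
    rcases lt_trichotomy ξ t with h | h | h
    · obtain ⟨η, hη, hηs⟩ := exists_hasDerivAt_eq_slope g'' g''' h
        (hg''c.mono (fun s hs => hsub ⟨hξab.1.le.trans hs.1, hs.2.trans htb.le⟩))
        (fun s hs => hg''d s ⟨lt_trans hξab.1 hs.1, lt_trans hs.2 htb⟩)
      have : g'' t - g'' ξ = g''' η * (t - ξ) := by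
        rw [eq_div_iff (sub_ne_zero.mpr (ne_of_gt h))] at hηs; linarith
      rw [abs_sub_comm, this, abs_mul]
      have h1 : |g''' η| ≤ M := hM η (hsub ⟨hξab.1.le.trans hη.1.le, hη.2.le.trans htb.le⟩)
      have h2 : |t - ξ| ≤ b - a := by
        rw [abs_of_pos (by linarith)]
        have := hξab.1; have := ht.2; linarith
      exact mul_le_mul h1 h2 (abs_nonneg _) hM0
    · rw [h, sub_self, abs_zero]; positivity
    · obtain ⟨η, hη, hηs⟩ := exists_hasDerivAt_eq_slope g'' g''' h
        (hg''c.mono (fun s hs => hsub ⟨hta.le.trans hs.1, hs.2.trans hξab.2.le⟩))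
        (fun s hs => hg''d s ⟨lt_trans hta hs.1, lt_trans hs.2 hξab.2⟩)
      have : g'' ξ - g'' t = g''' η * (ξ - t) := by
        rw [eq_div_iff (sub_ne_zero.mpr (ne_of_gt h))] at hηs; linarith
      rw [this, abs_mul]
      have h1 : |g''' η| ≤ M := hM η (hsub ⟨hta.le.trans hη.1.le, hη.2.le.trans hξab.2.le⟩)
      have h2 : |ξ - t| ≤ b - a := by
        rw [abs_of_pos (by linarith)]
        have := hξab.2; have := ht.1; linarith
      exact mul_le_mul h1 h2 (abs_nonneg _) hM0
  -- final computation
  have hexpr : g t - (g a * (b - t) / (b - a) + g b * (t - a) / (b - a)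
      + 1/2 * (t - a) * (t - b) * g'' t)
      = 1/2 * ((t - a) * (t - b)) * (g'' ξ - g'' t) := by
    have hgt : g t - (g a * (b - t) / (b - a) + g b * (t - a) / (b - a))
        = K * ((t - a) * (t - b)) := by
      rw [hK, div_mul_cancel₀ _ (mul_ne_zero htane htbne)]
    rw [hKval] at hgt
    linarith [hgt]
  rw [hexpr, abs_mul, abs_mul]
  have hq : |(t - a) * (t - b)| ≤ (b - a)^2 / 4 := by
    rw [abs_mul, abs_of_pos (by linarith : (0:ℝ) < t - a), abs_of_neg (by linarith : t - b < 0)]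
    nlinarith [sq_nonneg ((t - a) - (b - t))]
  have h12 : |(1:ℝ)/2| = 1/2 := by norm_num
  rw [h12]
  calc 1/2 * |(t - a) * (t - b)| * |g'' ξ - g'' t|
      ≤ 1/2 * ((b - a)^2 / 4) * (M * (b - a)) := by
        apply mul_le_mul _ hdiff (abs_nonneg _) (by positivity)
        apply mul_le_mul_of_nonneg_left hq (by norm_num)
    _ = (b - a)^3 / 8 * M := by ring


lemma hat_integral (X0 XN a m b β : ℝ) (f u u' u'' : ℝ → ℝ) (hβ : β ≠ 0)
    (ham : a < m) (hmb : m < b) (hX0a : X0 ≤ a) (hbXN : b ≤ XN)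
    (hfc : ContinuousOn f (Set.Icc X0 XN))
    (hu' : ∀ t ∈ Set.Icc X0 XN, HasDerivWithinAt u (u' t) (Set.Icc X0 XN) t)
    (hu'' : ∀ t ∈ Set.Icc X0 XN, HasDerivWithinAt u' (u'' t) (Set.Icc X0 XN) t)
    (hode : ∀ t ∈ Set.Icc X0 XN, β * u'' t = -f t) :
    ∫ t in a..b, f t * hatFun a m b t
      = β * ((u m - u a) / (m - a) - (u b - u m) / (b - m)) := by
  have hma : m - a ≠ 0 := ne_of_gt (by linarith)
  have hbm : b - m ≠ 0 := ne_of_gt (by linarith)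
  have hsub1 : Set.Icc a m ⊆ Set.Icc X0 XN := Icc_subset_Icc hX0a (by linarith)
  have hsub2 : Set.Icc m b ⊆ Set.Icc X0 XN := Icc_subset_Icc (by linarith) hbXN
  have huc : ContinuousOn u (Set.Icc X0 XN) := fun s hs => (hu' s hs).continuousWithinAt
  have hu'c : ContinuousOn u' (Set.Icc X0 XN) := fun s hs => (hu'' s hs).continuousWithinAt
  -- the integrand agrees with smooth formulas on each piece
  have heq1 : EqOn (fun t => f t * ((t - a) / (m - a))) (fun t => f t * hatFun a m b t)
      (Set.Icc a m) := by
    intro t htm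
    simp only [hatFun, if_pos htm]
  have heq2 : EqOn (fun t => f t * ((b - t) / (b - m))) (fun t => f t * hatFun a m b t)
      (Set.Icc m b) := by
    intro t htm
    by_cases h1 : t ∈ Set.Icc a m
    · have htm' : t = m := le_antisymm h1.2 htm.1
      subst htm'
      simp only [hatFun, if_pos h1]
      rw [div_self hma, div_self hbm]
    · simp only [hatFun, if_neg h1, if_pos htm]
  have hc1 : ContinuousOn (fun t => f t * ((t - a) / (m - a))) (Set.Icc a m) :=
    (hfc.mono hsub1).mul (((continuous_id.sub continuous_const).div_const _).continuousOn)
  have hc2 : ContinuousOn (fun t => f t * ((b - t) / (b - m))) (Set.Icc m b) :=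
    (hfc.mono hsub2).mul (((continuous_const.sub continuous_id).div_const _).continuousOn)
  have i1 : IntervalIntegrable (fun t => f t * ((t - a) / (m - a))) volume a m :=
    hc1.intervalIntegrable_of_Icc ham.le
  have i2 : IntervalIntegrable (fun t => f t * ((b - t) / (b - m))) volume m b :=
    hc2.intervalIntegrable_of_Icc hmb.le
  have I1 : IntervalIntegrable (fun t => f t * hatFun a m b t) volume a m := by
    rw [intervalIntegrable_iff_integrableOn_Icc_of_le ham.le]
    exact ((intervalIntegrable_iff_integrableOn_Icc_of_le ham.le).mp i1).congr_fun heq1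
      measurableSet_Icc
  have I2 : IntervalIntegrable (fun t => f t * hatFun a m b t) volume m b := by
    rw [intervalIntegrable_iff_integrableOn_Icc_of_le hmb.le]
    exact ((intervalIntegrable_iff_integrableOn_Icc_of_le hmb.le).mp i2).congr_fun heq2
      measurableSet_Icc
  have hsplit : (∫ t in a..m, f t * hatFun a m b t) + (∫ t in m..b, f t * hatFun a m b t)
      = ∫ t in a..b, f t * hatFun a m b t :=
    integral_add_adjacent_intervals I1 I2
  have hint : ∀ s ∈ Ioo a b, Set.Icc X0 XN ∈ nhds s := fun s hs =>
    Icc_mem_nhds (lt_of_le_of_lt hX0a hs.1) (lt_of_lt_of_le hs.2 hbXN)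
  -- FTC on [a, m]
  have key1 : ∫ t in a..m, f t * ((t - a) / (m - a))
      = (fun s => -β * (u' s * (s - a) - u s) / (m - a)) m
        - (fun s => -β * (u' s * (s - a) - u s) / (m - a)) a := by
    refine integral_eq_sub_of_hasDeriv_right_of_le
      (f := fun s => -β * (u' s * (s - a) - u s) / (m - a))
      (f' := fun t => f t * ((t - a) / (m - a))) ham.le ?_ ?_ i1
    · exact (continuousOn_const.mul (((hu'c.mono hsub1).mul
        ((continuous_id.sub continuous_const).continuousOn)).sub (huc.mono hsub1))).div_const
        (m - a)
    · intro t htm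
      have htm' : t ∈ Set.Icc X0 XN := hsub1 ⟨htm.1.le, htm.2.le⟩
      have hnb : Set.Icc X0 XN ∈ nhds t := hint t ⟨htm.1, lt_trans htm.2 hmb⟩
      have h1 : HasDerivAt u (u' t) t := (hu' t htm').hasDerivAt hnb
      have h2 : HasDerivAt u' (u'' t) t := (hu'' t htm').hasDerivAt hnb
      have hd : HasDerivAt (fun s => -β * (u' s * (s - a) - u s) / (m - a))
          (-β * (u'' t * (t - a) + u' t * 1 - u' t) / (m - a)) t :=
        (((h2.mul ((hasDerivAt_id t).sub_const a)).sub h1).const_mul (-β)).div_const (m - a)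
      apply HasDerivAt.hasDerivWithinAt
      refine hd.congr_deriv ?_
      have hft : f t = -(β * u'' t) := by linarith [hode t htm']
      simp only [hft]; ring
  -- FTC on [m, b]
  have key2 : ∫ t in m..b, f t * ((b - t) / (b - m))
      = (fun s => β * (u' s * (s - b) - u s) / (b - m)) b
        - (fun s => β * (u' s * (s - b) - u s) / (b - m)) m := by
    refine integral_eq_sub_of_hasDeriv_right_of_le
      (f := fun s => β * (u' s * (s - b) - u s) / (b - m))
      (f' := fun t => f t * ((b - t) / (b - m))) hmb.le ?_ ?_ i2
    · exact (continuousOn_const.mul (((hu'c.mono hsub2).mul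
        ((continuous_id.sub continuous_const).continuousOn)).sub (huc.mono hsub2))).div_const
        (b - m)
    · intro t htm
      have htm' : t ∈ Set.Icc X0 XN := hsub2 ⟨htm.1.le, htm.2.le⟩
      have hnb : Set.Icc X0 XN ∈ nhds t := hint t ⟨lt_trans ham htm.1, htm.2⟩
      have h1 : HasDerivAt u (u' t) t := (hu' t htm').hasDerivAt hnb
      have h2 : HasDerivAt u' (u'' t) t := (hu'' t htm').hasDerivAt hnb
      have hd : HasDerivAt (fun s => β * (u' s * (s - b) - u s) / (b - m))
          (β * (u'' t * (t - b) + u' t * 1 - u' t) / (b - m)) t :=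
        (((h2.mul ((hasDerivAt_id t).sub_const b)).sub h1).const_mul β).div_const (b - m)
      apply HasDerivAt.hasDerivWithinAt
      refine hd.congr_deriv ?_
      have hft : f t = -(β * u'' t) := by linarith [hode t htm']
      simp only [hft]; ring
  have e1 : ∫ t in a..m, f t * hatFun a m b t = ∫ t in a..m, f t * ((t - a) / (m - a)) :=
    integral_congr (by rw [uIcc_of_le ham.le]; exact heq1.symm)
  have e2 : ∫ t in m..b, f t * hatFun a m b t = ∫ t in m..b, f t * ((b - t) / (b - m)) :=
    integral_congr (by rw [uIcc_of_le hmb.le]; exact heq2.symm)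
  rw [← hsplit, e1, e2, key1, key2]
  simp only []
  field_simp
  ring



end FemAux

/-- The posterior-corrected `P₁` finite element solution
`u_h^{new}(x) = c_k (x_{k+1}−x)/(x_{k+1}−x_k) + c_{k+1} (x−x_k)/(x_{k+1}−x_k)
  − (1/(2β))(x−x_k)(x−x_{k+1}) f x` on each element `[x_k, x_{k+1}]`
is exact at the nodes, and satisfies the third-order pointwise bound
`|u x − u_h^{new} x| ≤ (h³/(8β)) sup |f'|` where `h` is the mesh size. -/
theorem posterior_corrected_fem_third_order_pointwise
    (n : ℕ) (hn : 1 ≤ n) (x : ℕ → ℝ) (hx : ∀ i < n, x i < x (i + 1))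
    (β : ℝ) (hβ : 0 < β) (f f' u u' u'' : ℝ → ℝ)
    (hf' : ∀ t ∈ Set.Icc (x 0) (x n), HasDerivWithinAt f (f' t) (Set.Icc (x 0) (x n)) t)
    (hf'c : ContinuousOn f' (Set.Icc (x 0) (x n)))
    (hu' : ∀ t ∈ Set.Icc (x 0) (x n), HasDerivWithinAt u (u' t) (Set.Icc (x 0) (x n)) t)
    (hu'' : ∀ t ∈ Set.Icc (x 0) (x n), HasDerivWithinAt u' (u'' t) (Set.Icc (x 0) (x n)) t)
    (hu''c : ContinuousOn u'' (Set.Icc (x 0) (x n)))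
    (hode : ∀ t ∈ Set.Icc (x 0) (x n), β * u'' t = -f t)
    (hu0 : u (x 0) = 0) (hun : u (x n) = 0)
    (c : ℕ → ℝ) (hc0 : c 0 = 0) (hcn : c n = 0)
    (hgal : ∀ i, 1 ≤ i → i ≤ n - 1 →
      β * ((c i - c (i - 1)) / (x i - x (i - 1)) - (c (i + 1) - c i) / (x (i + 1) - x i))
        = ∫ t in (x (i - 1))..(x (i + 1)), f t * hatFun (x (i - 1)) (x i) (x (i + 1)) t)
    (uhnew : ℝ → ℝ)
    (huh : ∀ k < n, ∀ t ∈ Set.Icc (x k) (x (k + 1)),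
      uhnew t = c k * (x (k + 1) - t) / (x (k + 1) - x k)
        + c (k + 1) * (t - x k) / (x (k + 1) - x k)
        - 1 / (2 * β) * (t - x k) * (t - x (k + 1)) * f t)
    (H : ℝ)
    (hH : H = (Finset.range n).sup' (Finset.nonempty_range_iff.mpr (by omega))
      (fun k => x (k + 1) - x k)) :
    (∀ k ≤ n, uhnew (x k) = u (x k)) ∧
    (∀ k < n, ∀ t ∈ Set.Icc (x k) (x (k + 1)),
      |u t - uhnew t| ≤ H ^ 3 / (8 * β) * ⨆ s : Set.Icc (x 0) (x n), |f' s|) := by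
  have hβ' : β ≠ 0 := ne_of_gt hβ
  have hmono : ∀ i j, i ≤ j → j ≤ n → x i ≤ x j := by
    intro i j hij hjn
    induction hij with
    | refl => exact le_rfl
    | @step m h ih => exact (ih (by omega)).trans (hx m (by omega)).le
  have hX : x 0 ≤ x n := hmono 0 n (by omega) le_rfl
  have hmem : ∀ k, k ≤ n → x k ∈ Set.Icc (x 0) (x n) := fun k hk =>
    ⟨hmono 0 k (by omega) hk, hmono k n hk le_rfl⟩
  have hfc : ContinuousOn f (Set.Icc (x 0) (x n)) := fun s hs => (hf' s hs).continuousWithinAt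
  -- key: the Galerkin RHS integral in terms of u
  have key : ∀ j, j + 2 ≤ n →
      (c (j+1) - c j) / (x (j+1) - x j) - (c (j+2) - c (j+1)) / (x (j+2) - x (j+1))
      = (u (x (j+1)) - u (x j)) / (x (j+1) - x j)
        - (u (x (j+2)) - u (x (j+1))) / (x (j+2) - x (j+1)) := by
    intro j hj
    have hg := hgal (j+1) (by omega) (by omega)
    simp only [Nat.add_sub_cancel] at hg
    have hi := hat_integral (x 0) (x n) (x j) (x (j+1)) (x (j+2)) β f u u' u'' hβ'
      (hx j (by omega)) (hx (j+1) (by omega)) (hmono 0 j (by omega) (by omega))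
      (hmono (j+2) n (by omega) le_rfl) hfc hu' hu'' hode
    rw [hi] at hg
    exact mul_left_cancel₀ hβ' hg
  -- nodal exactness
  set e : ℕ → ℝ := fun k => c k - u (x k) with he
  set d : ℕ → ℝ := fun k => (e (k+1) - e k) / (x (k+1) - x k) with hd
  have hdc : ∀ j, j + 1 ≤ n → d j = d 0 := by
    intro j
    induction j with
    | zero => intro _; rfl
    | succ m ih =>
      intro hm
      have hk := key m (by omega)
      have : d (m+1) = d m := by
        simp only [d, e]
        linear_combination -hk
      rw [this, ih (by omega)]
  have htel : ∀ k, k ≤ n → e k = e 0 + d 0 * (x k - x 0) := by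
    intro k
    induction k with
    | zero => intro _; ring
    | succ m ih =>
      intro hm
      have hne : x (m+1) - x m ≠ 0 := ne_of_gt (sub_pos.mpr (hx m (by omega)))
      have h1 : e (m+1) - e m = d m * (x (m+1) - x m) := by
        simp only [d]
        rw [div_mul_cancel₀ _ hne]
      have h2 : d m = d 0 := hdc m (by omega)
      have h3 := ih (by omega)
      rw [h2] at h1
      linarith
  have he0 : e 0 = 0 := by simp [e, hc0, hu0]
  have hen : e n = 0 := by simp [e, hcn, hun]
  have hd0 : d 0 = 0 := by
    have := htel n le_rfl
    rw [he0, hen] at this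
    have hne : x n - x 0 ≠ 0 := ne_of_gt (sub_pos.mpr (lt_of_lt_of_le (hx 0 (by omega))
      (hmono 1 n hn le_rfl)))
    field_simp at this
    rcases mul_eq_zero.mp (by linarith : d 0 * (x n - x 0) = 0) with h | h
    · exact h
    · exact absurd h hne
  have cnode : ∀ k, k ≤ n → c k = u (x k) := by
    intro k hk
    have := htel k hk
    rw [he0, hd0] at this
    simp only [e] at this
    linarith
  -- first conclusion
  have conc1 : ∀ k ≤ n, uhnew (x k) = u (x k) := by
    intro k hk
    rcases lt_or_eq_of_le hk with hk' | hk'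
    · have hne : x (k+1) - x k ≠ 0 := ne_of_gt (sub_pos.mpr (hx k hk'))
      have := huh k hk' (x k) ⟨le_rfl, (hx k hk').le⟩
      rw [this, ← cnode k hk]
      field_simp
      ring
    · subst hk'
      have hkn : k - 1 < k := by omega
      have hk1 : k - 1 + 1 = k := by omega
      have hlt : x (k-1) < x k := by have := hx (k-1) hkn; rwa [hk1] at this
      have := huh (k-1) hkn (x k) (by rw [hk1]; exact ⟨hlt.le, le_rfl⟩)
      rw [hk1] at this
      have hne : x k - x (k-1) ≠ 0 := by
        have := hx (k-1) hkn; rw [hk1] at this; exact ne_of_gt (sub_pos.mpr this)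
      rw [this, ← cnode k le_rfl]
      field_simp
      ring
  refine ⟨conc1, ?_⟩
  -- bound setup
  set M : ℝ := ⨆ s : Set.Icc (x 0) (x n), |f' s| with hM
  have hbdd : BddAbove (Set.range fun s : Set.Icc (x 0) (x n) => |f' (s:ℝ)|) := by
    have hcomp : IsCompact ((fun t => |f' t|) '' Set.Icc (x 0) (x n)) :=
      isCompact_Icc.image_of_continuousOn hf'c.abs
    have hr : Set.range (fun s : Set.Icc (x 0) (x n) => |f' (s:ℝ)|)
        = (fun t => |f' t|) '' Set.Icc (x 0) (x n) := by
      ext y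
      constructor
      · rintro ⟨⟨s, hs⟩, rfl⟩; exact ⟨s, hs, rfl⟩
      · rintro ⟨s, hs, rfl⟩; exact ⟨⟨s, hs⟩, rfl⟩
    rw [hr]
    exact hcomp.bddAbove
  have hMle : ∀ s ∈ Set.Icc (x 0) (x n), |f' s| ≤ M := fun s hs => le_ciSup hbdd ⟨s, hs⟩
  have hM0 : 0 ≤ M := le_trans (abs_nonneg _) (hMle (x 0) ⟨le_rfl, hX⟩)
  -- u'' has derivative -f'/β
  have hu''d : ∀ s ∈ Set.Icc (x 0) (x n),
      HasDerivWithinAt u'' (-f' s / β) (Set.Icc (x 0) (x n)) s := by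
    intro s hs
    have h0 : HasDerivWithinAt (fun y => -f y / β) (-f' s / β) (Set.Icc (x 0) (x n)) s :=
      ((hf' s hs).neg).div_const β
    apply h0.congr
    · intro y hy
      have := hode y hy
      field_simp
      linarith
    · have := hode s hs
      field_simp
      linarith
  have hM'le : ∀ s ∈ Set.Icc (x 0) (x n), |(-f' s / β)| ≤ M / β := by
    intro s hs
    rw [abs_div, abs_neg, abs_of_pos hβ]
    exact (div_le_div_iff_of_pos_right hβ).mpr (hMle s hs)
  intro k hk t ht
  set a := x k
  set b := x (k+1)
  have hab : a < b := hx k hk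
  have hX0a : x 0 ≤ a := hmono 0 k (by omega) (by omega)
  have hbXN : b ≤ x n := hmono (k+1) n (by omega) le_rfl
  have htI : t ∈ Set.Icc (x 0) (x n) := ⟨le_trans hX0a ht.1, le_trans ht.2 hbXN⟩
  have hfode : f t = -(β * u'' t) := by linarith [hode t htI]
  have huhe : uhnew t = u a * (b - t) / (b - a) + u b * (t - a) / (b - a)
      + 1/2 * (t - a) * (t - b) * u'' t := by
    rw [huh k hk t ht, ← cnode k (by omega), ← cnode (k+1) (by omega)]
    rw [hfode]
    field_simp
    ring
  rw [huhe]
  have hbound := interp_err (x 0) (x n) a b u u' u'' (fun s => -f' s / β) hab hX0a hbXN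
    hu' hu'' hu''d (M / β) hM'le t ht
  refine le_trans hbound ?_
  have hbaH : b - a ≤ H := by
    rw [hH]
    show x (k+1) - x k ≤ _
    exact Finset.le_sup' (fun i => x (i+1) - x i) (Finset.mem_range.mpr hk)
  have hba : 0 ≤ b - a := by linarith
  calc (b - a)^3 / 8 * (M / β) ≤ H^3 / 8 * (M / β) := by
        have h3 : (b - a)^3 ≤ H^3 := pow_le_pow_left₀ hba hbaH 3
        have hm : (0:ℝ) ≤ M / β := by positivity
        apply mul_le_mul_of_nonneg_right _ hm
        linarith
    _ = H^3 / (8 * β) * M := by ring
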